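/- Let M(λ) = H − λ A_0 + Σ_{i=1}^N (λ − α_i)⁻¹ A_i with H self-adjoint and A_0, …, A_N self-adjoint positive definite on a finite-dimensional complex inner product space, α_i distinct reals. If λ_0 is a real eigenvalue (not equal to any α_i) with eigenvector ψ_0 ≠ 0, then there is no Jordan chain of length 2: there is no ψ_1 with M(λ_0)ψ_1 + M'(λ_0)ψ_0 = 0. In particular every eigenvalue of the pencil is semi-simple. -/

import Mathlib

open Finset

/-- For the Herglotz operator pencil `M(λ) = H − λ A₀ + Σ (λ − α_i)⁻¹ A_i`
with `H` self-adjoint and `A₀, …, A_N` self-adjoint positive definite, no real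
eigenvalue admits a Jordan chain of length 2: there is no `ψ₁` with
`M(λ₀)ψ₁ + M'(λ₀)ψ₀ = 0`, where `M'(λ₀) = −A₀ − Σ (λ₀ − α_i)⁻² A_i`.
Hence every eigenvalue is semi-simple. -/
theorem stmt_6 {E : Type*} [NormedAddCommGroup E] [InnerProductSpace ℂ E]
    [FiniteDimensional ℂ E]
    (N : ℕ) (H A0 : E →ₗ[ℂ] E) (A : Fin N → (E →ₗ[ℂ] E)) (α : Fin N → ℝ)
    (hH : H.IsSymmetric)
    (hA0 : A0.IsSymmetric) (hA0pos : ∀ ψ : E, ψ ≠ 0 → 0 < (inner ℂ ψ (A0 ψ) : ℂ).re)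
    (hA : ∀ i, (A i).IsSymmetric)
    (hApos : ∀ i, ∀ ψ : E, ψ ≠ 0 → 0 < (inner ℂ ψ ((A i) ψ) : ℂ).re)
    (hdist : Function.Injective α)
    (lam0 : ℝ) (hlam0 : ∀ i, lam0 ≠ α i)
    (ψ0 : E) (hψ0 : ψ0 ≠ 0)
    (heig : H ψ0 - (lam0 : ℂ) • A0 ψ0 + ∑ i, ((lam0 : ℂ) - (α i : ℂ))⁻¹ • (A i) ψ0 = 0) :
    ¬ ∃ ψ1 : E,
      (H ψ1 - (lam0 : ℂ) • A0 ψ1 + ∑ i, ((lam0 : ℂ) - (α i : ℂ))⁻¹ • (A i) ψ1) +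
      (-(A0 ψ0) - ∑ i, (((lam0 : ℂ) - (α i : ℂ)) ^ 2)⁻¹ • (A i) ψ0) = 0 := by
  rintro ⟨ψ1, hch⟩
  set c : Fin N → ℂ := fun i => ((lam0 : ℂ) - (α i : ℂ))⁻¹ with hc_def
  have hc : ∀ i, (starRingEnd ℂ) (c i) = c i := by
    intro i
    simp [hc_def, map_inv₀, Complex.conj_ofReal, ← Complex.ofReal_sub]
  set Mop : E →ₗ[ℂ] E := H - (lam0 : ℂ) • A0 + ∑ i, c i • A i with hM_def
  have hMop : ∀ ψ : E, Mop ψ = H ψ - (lam0 : ℂ) • A0 ψ + ∑ i, c i • A i ψ := by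
    intro ψ
    simp [hM_def, LinearMap.sum_apply]
  have hsym : Mop.IsSymmetric := by
    intro x y
    simp only [hMop, inner_sub_left, inner_sub_right, inner_add_left, inner_add_right,
      inner_smul_left, inner_smul_right, sum_inner, inner_sum, hc, Complex.conj_ofReal,
      hH x y, hA0 x y]
    congr 1
    exact Finset.sum_congr rfl fun i _ => by rw [hA i x y]
  have hM0 : Mop ψ0 = 0 := by rw [hMop]; exact heig
  have hMψ1 : Mop ψ1 = A0 ψ0 + ∑ i, (((lam0 : ℂ) - (α i : ℂ)) ^ 2)⁻¹ • (A i) ψ0 := by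
    rw [hMop]
    rw [add_eq_zero_iff_eq_neg] at hch
    rw [hch]; abel
  have hz : (inner ℂ ψ0 (Mop ψ1) : ℂ) = 0 := by
    rw [← hsym ψ0 ψ1, hM0, inner_zero_left]
  rw [hMψ1] at hz
  have hre : (inner ℂ ψ0 (A0 ψ0) : ℂ).re
      + ∑ i, (((lam0 : ℝ) - α i) ^ 2)⁻¹ * (inner ℂ ψ0 ((A i) ψ0) : ℂ).re = 0 := by
    have h2 : ∀ i : Fin N, ((((lam0 : ℂ) - (α i : ℂ)) ^ 2)⁻¹ * (inner ℂ ψ0 ((A i) ψ0) : ℂ)).re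
        = (((lam0 : ℝ) - α i) ^ 2)⁻¹ * (inner ℂ ψ0 ((A i) ψ0) : ℂ).re := by
      intro i
      rw [show (((lam0 : ℂ) - (α i : ℂ)) ^ 2)⁻¹ = (((((lam0 : ℝ) - α i) ^ 2)⁻¹ : ℝ) : ℂ) by
        push_cast; ring]
      rw [Complex.re_ofReal_mul]
    calc (inner ℂ ψ0 (A0 ψ0) : ℂ).re
        + ∑ i, (((lam0 : ℝ) - α i) ^ 2)⁻¹ * (inner ℂ ψ0 ((A i) ψ0) : ℂ).re
        = ((inner ℂ ψ0 (A0 ψ0 + ∑ i, (((lam0 : ℂ) - (α i : ℂ)) ^ 2)⁻¹ • (A i) ψ0) : ℂ)).re := by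
          rw [inner_add_right, inner_sum]
          simp only [inner_smul_right, Complex.add_re, Complex.re_sum, h2]
      _ = 0 := by rw [hz]; simp
  have hpos0 : 0 < (inner ℂ ψ0 (A0 ψ0) : ℂ).re := hA0pos ψ0 hψ0
  have hsumpos : 0 ≤ ∑ i, (((lam0 : ℝ) - α i) ^ 2)⁻¹ * (inner ℂ ψ0 ((A i) ψ0) : ℂ).re := by
    apply Finset.sum_nonneg
    intro i _
    have h1 : 0 < (((lam0 : ℝ) - α i) ^ 2)⁻¹ := by
      have : lam0 - α i ≠ 0 := sub_ne_zero.mpr (hlam0 i)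
      positivity
    exact le_of_lt (mul_pos h1 (hApos i ψ0 hψ0))
  linarith
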